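/- Let f : (0,1) → ℝ be integrable and 0 < s < 1. Then ∫₀ˢ λ(t; f) dt = sup{ ∫ f·a dm : a measurable, 0 ≤ a ≤ 1, ∫ a dm = s }. -/

import Mathlib

open MeasureTheory Set

/-- The decreasing rearrangement (spectral scale) of `f` on `(0,1)`. -/
noncomputable def rr (f : ℝ → ℝ) (t : ℝ) : ℝ :=
  sInf {s : ℝ | volume {u ∈ Ioo (0:ℝ) 1 | s < f u} ≤ ENNReal.ofReal t}

/-- Hardy–Littlewood–Pólya majorisation `g ≺ f` on `(0,1)`. -/
def Maj (g f : ℝ → ℝ) : Prop :=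
  (∀ s ∈ Ico (0:ℝ) 1, (∫ t in Ioo (0:ℝ) s, rr g t) ≤ ∫ t in Ioo (0:ℝ) s, rr f t) ∧
    (∫ t in Ioo (0:ℝ) 1, rr g t) = ∫ t in Ioo (0:ℝ) 1, rr f t

/-- The orbit `Ω(y)` of all integrable functions on `(0,1)` majorised by `y`. -/
def Omega (y : ℝ → ℝ) : Set (ℝ → ℝ) :=
  {x | IntegrableOn x (Ioo (0:ℝ) 1) ∧ Maj x y}

/-- `x` is an extreme point of the convex set `Ω` (functions identified a.e. on `(0,1)`). -/
def ExtremePt (Ω : Set (ℝ → ℝ)) (x : ℝ → ℝ) : Prop :=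
  x ∈ Ω ∧ ∀ x₁ ∈ Ω, ∀ x₂ ∈ Ω,
    (∀ᵐ u ∂(volume.restrict (Ioo (0:ℝ) 1)), x u = (x₁ u + x₂ u) / 2) →
    (∀ᵐ u ∂(volume.restrict (Ioo (0:ℝ) 1)), x₁ u = x₂ u)

open Filter Topology

noncomputable def dd (g : ℝ → ℝ) (y : ℝ) : ENNReal :=
  (volume.restrict (Ioo (0:ℝ) 1)) {u | y < g u}

lemma sep_eq (g : ℝ → ℝ) (y : ℝ) :
    {u ∈ Ioo (0:ℝ) 1 | y < g u} = {u | y < g u} ∩ Ioo (0:ℝ) 1 := by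
  ext u; simp [and_comm]

lemma vol_sep (g : ℝ → ℝ) (y : ℝ) :
    volume {u ∈ Ioo (0:ℝ) 1 | y < g u} = dd g y := by
  rw [sep_eq, dd, Measure.restrict_apply' measurableSet_Ioo]

lemma rr_eq (g : ℝ → ℝ) (t : ℝ) :
    rr g t = sInf {x | dd g x ≤ ENNReal.ofReal t} := by
  unfold rr; congr 1; ext x; simp only [mem_setOf_eq]; rw [vol_sep]

lemma dd_anti (g : ℝ → ℝ) : Antitone (dd g) :=
  fun y y' h => measure_mono (fun u hu => lt_of_le_of_lt h hu)

lemma dd_le_one (g : ℝ → ℝ) (y : ℝ) : dd g y ≤ 1 := by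
  calc dd g y ≤ (volume.restrict (Ioo (0:ℝ) 1)) univ := measure_mono (subset_univ _)
    _ = 1 := by simp [Real.volume_Ioo]

lemma dd_ne_top (g : ℝ → ℝ) (y : ℝ) : dd g y ≠ ⊤ :=
  ne_of_lt (lt_of_le_of_lt (dd_le_one g y) (by norm_num))

lemma dd_tendsto_zero (g : ℝ → ℝ) (hg : Measurable g) :
    Tendsto (fun n : ℕ => dd g n) atTop (nhds 0) := by
  have hempty : ⋂ n : ℕ, {u : ℝ | (n:ℝ) < g u} = ∅ := by
    ext u
    simp only [mem_iInter, mem_setOf_eq, mem_empty_iff_false, iff_false, not_forall, not_lt]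
    obtain ⟨n, hn⟩ := exists_nat_ge (g u)
    exact ⟨n, hn⟩
  have := tendsto_measure_iInter_atTop (μ := volume.restrict (Ioo (0:ℝ) 1))
    (s := fun n : ℕ => {u : ℝ | (n:ℝ) < g u})
    (fun n => (measurableSet_lt measurable_const hg).nullMeasurableSet)
    (fun n m hnm => fun u hu => by
      have hle : (n:ℝ) ≤ m := Nat.cast_le.2 hnm
      simp only [mem_setOf_eq] at hu ⊢
      linarith)
    ⟨0, dd_ne_top g _⟩
  rw [hempty, measure_empty] at this
  exact this

lemma dd_tendsto_one (g : ℝ → ℝ) :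
    Tendsto (fun n : ℕ => dd g (-(n:ℝ))) atTop (nhds 1) := by
  have huniv : ⋃ n : ℕ, {u : ℝ | -(n:ℝ) < g u} = univ := by
    ext u
    simp only [mem_iUnion, mem_setOf_eq, mem_univ, iff_true]
    obtain ⟨n, hn⟩ := exists_nat_gt (-(g u))
    exact ⟨n, by linarith⟩
  have := tendsto_measure_iUnion_atTop (μ := volume.restrict (Ioo (0:ℝ) 1))
    (s := fun n : ℕ => {u : ℝ | -(n:ℝ) < g u})
    (fun n m hnm => fun u hu => by
      have hle : (n:ℝ) ≤ m := Nat.cast_le.2 hnm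
      simp only [mem_setOf_eq] at hu ⊢
      linarith)
  rw [huniv] at this
  have h1 : (volume.restrict (Ioo (0:ℝ) 1)) univ = 1 := by simp [Real.volume_Ioo]
  rw [h1] at this
  exact this

lemma dd_sup (g : ℝ → ℝ) (y : ℝ) {t : ENNReal} (h : t < dd g y) :
    ∃ ε > (0:ℝ), t < dd g (y + ε) := by
  have hU : {u : ℝ | y < g u} = ⋃ n : ℕ, {u : ℝ | y + 1/(n+1) < g u} := by
    ext u
    simp only [mem_iUnion, mem_setOf_eq]
    constructor
    · intro hu
      obtain ⟨n, hn⟩ := exists_nat_one_div_lt (show (0:ℝ) < g u - y by linarith)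
      exact ⟨n, by push_cast at hn ⊢; linarith⟩
    · rintro ⟨n, hn⟩
      have : (0:ℝ) < 1/(n+1) := by positivity
      linarith
  have hmono : Monotone (fun n : ℕ => {u : ℝ | y + 1/((n:ℝ)+1) < g u}) := by
    intro n m hnm u hu
    simp only [mem_setOf_eq] at hu ⊢
    have h2 : 1/((m:ℝ)+1) ≤ 1/((n:ℝ)+1) := by
      apply one_div_le_one_div_of_le (by positivity)
      exact_mod_cast by omega
    linarith
  have hsup : dd g y = ⨆ n : ℕ, dd g (y + 1/(n+1)) := by
    rw [dd, hU, hmono.measure_iUnion]; rfl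
  rw [hsup] at h
  obtain ⟨n, hn⟩ := lt_iSup_iff.mp h
  exact ⟨1/(n+1), by positivity, hn⟩

lemma S_nonempty (g : ℝ → ℝ) (hg : Measurable g) {t : ℝ} (ht : 0 < t) :
    {x | dd g x ≤ ENNReal.ofReal t}.Nonempty := by
  have := (dd_tendsto_zero g hg).eventually_lt_const (ENNReal.ofReal_pos.2 ht)
  obtain ⟨n, hn⟩ := this.exists
  exact ⟨n, hn.le⟩

lemma S_bdd (g : ℝ → ℝ) {t : ℝ} (ht : t < 1) :
    BddBelow {x | dd g x ≤ ENNReal.ofReal t} := by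
  have h1 : ENNReal.ofReal t < 1 := by
    rcases le_or_gt t 0 with h | h
    · simp [ENNReal.ofReal_eq_zero.2 h]
    · rw [show (1:ENNReal) = ENNReal.ofReal 1 by simp]
      exact ENNReal.ofReal_lt_ofReal_iff_of_nonneg h.le |>.2 ht
  have := (dd_tendsto_one g).eventually_const_lt h1
  obtain ⟨n, hn⟩ := this.exists
  refine ⟨-(n:ℝ), fun x hx => ?_⟩
  by_contra hc
  push_neg at hc
  exact absurd (le_trans (dd_anti g hc.le) hx) (not_le.2 hn)

lemma lt_rr_iff (g : ℝ → ℝ) (hg : Measurable g) {t : ℝ} (ht : t ∈ Ioo (0:ℝ) 1) (y : ℝ) :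
    y < rr g t ↔ ENNReal.ofReal t < dd g y := by
  rw [rr_eq]
  constructor
  · intro h
    by_contra h'
    push_neg at h'
    exact absurd (csInf_le (S_bdd g ht.2) h') (not_le.2 h)
  · intro h
    obtain ⟨ε, hε, hε'⟩ := dd_sup g y h
    have hle : y + ε ≤ sInf {x | dd g x ≤ ENNReal.ofReal t} := by
      apply le_csInf (S_nonempty g hg ht.1)
      intro x hx
      by_contra hc
      push_neg at hc
      exact absurd hx (not_le.2 (lt_of_lt_of_le hε' (dd_anti g hc.le)))
    linarith

lemma rr_anti (g : ℝ → ℝ) (hg : Measurable g) : AntitoneOn (rr g) (Ioo (0:ℝ) 1) := by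
  intro t ht t' ht' h
  rw [rr_eq, rr_eq]
  exact csInf_le_csInf (S_bdd g ht'.2) (S_nonempty g hg ht.1)
    (fun x hx => le_trans hx (ENNReal.ofReal_le_ofReal h))

lemma vol_rr (g : ℝ → ℝ) (hg : Measurable g) (y : ℝ) :
    volume {t ∈ Ioo (0:ℝ) 1 | y < rr g t} = dd g y := by
  have hne := dd_ne_top g y
  have htoReal_le : (dd g y).toReal ≤ 1 := by
    rw [← ENNReal.toReal_one]
    exact ENNReal.toReal_mono (by norm_num) (dd_le_one g y)
  have hset : {t ∈ Ioo (0:ℝ) 1 | y < rr g t} = Ioo 0 ((dd g y).toReal) := by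
    ext t
    simp only [mem_sep_iff, mem_Ioo]
    constructor
    · rintro ⟨ht, hy⟩
      have := (lt_rr_iff g hg ht y).1 hy
      exact ⟨ht.1, (ENNReal.ofReal_lt_iff_lt_toReal ht.1.le hne).1 this⟩
    · rintro ⟨h0, h1⟩
      have ht1 : t < 1 := lt_of_lt_of_le h1 htoReal_le
      exact ⟨⟨h0, ht1⟩, (lt_rr_iff g hg ⟨h0, ht1⟩ y).2
        ((ENNReal.ofReal_lt_iff_lt_toReal h0.le hne).2 h1)⟩
  rw [hset, Real.volume_Ioo, sub_zero, ENNReal.ofReal_toReal hne]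

theorem main_meas (g : ℝ → ℝ) (hgm : Measurable g) (hg : IntegrableOn g (Ioo (0:ℝ) 1))
    {s : ℝ} (hs : s ∈ Ioo (0:ℝ) 1) :
    (∫ t in Ioo (0:ℝ) s, rr g t) =
      sSup {I : ℝ | ∃ a : ℝ → ℝ, Measurable a ∧ (∀ u, a u ∈ Icc (0:ℝ) 1) ∧
        (∫ u in Ioo (0:ℝ) 1, a u) = s ∧ I = ∫ u in Ioo (0:ℝ) 1, g u * a u} := by
  obtain ⟨hs0, hs1⟩ := hs
  have hsIoo : s ∈ Ioo (0:ℝ) 1 := ⟨hs0, hs1⟩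
  set c := rr g s with hc
  set F : ℝ → ℝ := fun u => max (g u - c) 0 with hF
  set μ₀ := volume.restrict (Ioo (0:ℝ) 1) with hμ₀
  have hg' : Integrable g μ₀ := hg
  haveI : IsFiniteMeasure μ₀ := by
    constructor
    rw [hμ₀, Measure.restrict_apply_univ, Real.volume_Ioo]
    exact ENNReal.ofReal_lt_top
  have hFm : Measurable F := (hgm.sub measurable_const).max measurable_const
  have hFint : Integrable F μ₀ := (hg'.sub (integrable_const c)).pos_part
  -- layer cake
  have hrrAE : AEMeasurable (rr g) μ₀ :=
    aemeasurable_restrict_of_antitoneOn measurableSet_Ioo (rr_anti g hgm)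
  set G : ℝ → ℝ := fun t => max (rr g t - c) 0 with hG
  have hGAE : AEMeasurable G μ₀ := (hrrAE.sub aemeasurable_const).max aemeasurable_const
  have layF : ∫⁻ u, ENNReal.ofReal (F u) ∂μ₀ = ∫⁻ y in Ioi (0:ℝ), μ₀ {u | y < F u} :=
    lintegral_eq_lintegral_meas_lt μ₀ (ae_of_all _ fun u => le_max_right _ _) hFm.aemeasurable
  have layG : ∫⁻ t, ENNReal.ofReal (G t) ∂μ₀ = ∫⁻ y in Ioi (0:ℝ), μ₀ {t | y < G t} :=
    lintegral_eq_lintegral_meas_lt μ₀ (ae_of_all _ fun t => le_max_right _ _) hGAE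
  have hsets : ∀ y ∈ Ioi (0:ℝ), μ₀ {u | y < F u} = μ₀ {t | y < G t} := by
    intro y hy
    have hy0 : (0:ℝ) < y := hy
    have h1 : {u | y < F u} = {u | c + y < g u} := by
      ext u; simp only [hF, mem_setOf_eq, lt_max_iff]
      constructor
      · rintro (h | h)
        · linarith
        · linarith
      · intro h; left; linarith
    have h2 : {t | y < G t} = {t | c + y < rr g t} := by
      ext t; simp only [hG, mem_setOf_eq, lt_max_iff]
      constructor
      · rintro (h | h)
        · linarith
        · linarith
      · intro h; left; linarith
    rw [h1, h2]
    have e1 : μ₀ {u | c + y < g u} = dd g (c + y) := rfl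
    have e2 : μ₀ {t | c + y < rr g t} = volume {t ∈ Ioo (0:ℝ) 1 | c + y < rr g t} := by
      rw [hμ₀, Measure.restrict_apply' measurableSet_Ioo]
      congr 1; ext t; simp [and_comm]
    rw [e1, e2, vol_rr g hgm]
  have hlin : ∫⁻ u, ENNReal.ofReal (F u) ∂μ₀ = ∫⁻ t, ENNReal.ofReal (G t) ∂μ₀ := by
    rw [layF, layG]
    exact setLIntegral_congr_fun measurableSet_Ioi hsets
  have hGof : ∀ t, ENNReal.ofReal (G t) = ENNReal.ofReal (rr g t - c) := by
    intro t
    rcases le_total (rr g t - c) 0 with h | h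
    · rw [show G t = max (rr g t - c) 0 from rfl, max_eq_right h, ENNReal.ofReal_zero,
        eq_comm, ENNReal.ofReal_eq_zero]
      exact h
    · rw [show G t = max (rr g t - c) 0 from rfl, max_eq_left h]
  have hunion : Ioo (0:ℝ) 1 = Ioo 0 s ∪ Ico s 1 := by
    ext t; simp only [mem_Ioo, mem_union, mem_Ico]
    constructor
    · rintro ⟨h0, h1⟩
      rcases lt_or_ge t s with h | h
      · exact Or.inl ⟨h0, h⟩
      · exact Or.inr ⟨h, h1⟩
    · rintro (⟨h0, h1⟩ | ⟨h0, h1⟩)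
      · exact ⟨h0, h1.trans hs1⟩
      · exact ⟨hs0.trans_le h0, h1⟩
  have hzero : ∫⁻ t in Ico s 1, ENNReal.ofReal (rr g t - c) = 0 := by
    have hz : ∀ t ∈ Ico s 1, ENNReal.ofReal (rr g t - c) = 0 := by
      intro t ht
      rcases eq_or_lt_of_le ht.1 with h | h
      · rw [← h]; simp [hc]
      · have hle : rr g t ≤ c := rr_anti g hgm hsIoo ⟨hs0.trans h, ht.2⟩ h.le
        exact ENNReal.ofReal_eq_zero.2 (by linarith)
    calc ∫⁻ t in Ico s 1, ENNReal.ofReal (rr g t - c)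
        = ∫⁻ _ in Ico s 1, 0 := setLIntegral_congr_fun measurableSet_Ico hz
      _ = 0 := lintegral_zero
  have hsplit : ∫⁻ t, ENNReal.ofReal (rr g t - c) ∂μ₀
      = ∫⁻ t in Ioo (0:ℝ) s, ENNReal.ofReal (rr g t - c) := by
    rw [hμ₀, hunion, lintegral_union measurableSet_Ico
      (by
        rw [Set.disjoint_left]
        rintro a ⟨_, h2⟩ ⟨h3, _⟩
        exact absurd h3 (not_le.2 h2)),
      hzero, add_zero]
  have hkey : ∫⁻ t in Ioo (0:ℝ) s, ENNReal.ofReal (rr g t - c)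
      = ∫⁻ u, ENNReal.ofReal (F u) ∂μ₀ := by
    calc ∫⁻ t in Ioo (0:ℝ) s, ENNReal.ofReal (rr g t - c)
        = ∫⁻ t, ENNReal.ofReal (rr g t - c) ∂μ₀ := hsplit.symm
      _ = ∫⁻ t, ENNReal.ofReal (G t) ∂μ₀ := (lintegral_congr hGof).symm
      _ = ∫⁻ u, ENNReal.ofReal (F u) ∂μ₀ := hlin.symm
  have hFfin : ∫⁻ u, ENNReal.ofReal (F u) ∂μ₀ < ⊤ := by
    have he : ∀ u, ENNReal.ofReal (F u) = ‖F u‖ₑ :=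
      fun u => (Real.enorm_eq_ofReal (le_max_right _ _)).symm
    calc ∫⁻ u, ENNReal.ofReal (F u) ∂μ₀ = ∫⁻ u, ‖F u‖ₑ ∂μ₀ := lintegral_congr he
      _ < ⊤ := hFint.2
  have hfin : ∫⁻ t in Ioo (0:ℝ) s, ENNReal.ofReal (rr g t - c) < ⊤ := by
    rw [hkey]; exact hFfin
  -- integrability of rr on (0,s)
  have hrrAE' : AEMeasurable (rr g) (volume.restrict (Ioo (0:ℝ) s)) :=
    aemeasurable_restrict_of_antitoneOn measurableSet_Ioo
      ((rr_anti g hgm).mono (Ioo_subset_Ioo le_rfl hs1.le))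
  have hrrpos : ∀ᵐ t ∂(volume.restrict (Ioo (0:ℝ) s)), 0 ≤ rr g t - c := by
    filter_upwards [ae_restrict_mem measurableSet_Ioo] with t ht
    have : c ≤ rr g t := rr_anti g hgm ⟨ht.1, ht.2.trans hs1⟩ hsIoo ht.2.le
    linarith
  have hint1 : IntegrableOn (fun t => rr g t - c) (Ioo (0:ℝ) s) := by
    refine ⟨(hrrAE'.sub aemeasurable_const).aestronglyMeasurable, ?_⟩
    have he : ∫⁻ t in Ioo (0:ℝ) s, ‖rr g t - c‖ₑ
        = ∫⁻ t in Ioo (0:ℝ) s, ENNReal.ofReal (rr g t - c) := by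
      apply lintegral_congr_ae
      filter_upwards [hrrpos] with t ht
      exact Real.enorm_eq_ofReal ht
    show ∫⁻ t, ‖rr g t - c‖ₑ ∂(volume.restrict (Ioo (0:ℝ) s)) < ⊤
    rw [he]; exact hfin
  have hint2 : IntegrableOn (rr g) (Ioo (0:ℝ) s) :=
    (hint1.add (integrable_const c)).congr (ae_of_all _ fun t => by simp)
  -- the value of the integral
  have hvols : volume (Ioo (0:ℝ) s) = ENNReal.ofReal s := by
    rw [Real.volume_Ioo, sub_zero]
  have e2 : ∫ t in Ioo (0:ℝ) s, (rr g t - c)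
      = (∫⁻ t in Ioo (0:ℝ) s, ENNReal.ofReal (rr g t - c)).toReal :=
    integral_eq_lintegral_of_nonneg_ae hrrpos (hrrAE'.sub aemeasurable_const).aestronglyMeasurable
  have e3 : ∫ u in Ioo (0:ℝ) 1, F u = (∫⁻ u, ENNReal.ofReal (F u) ∂μ₀).toReal :=
    integral_eq_lintegral_of_nonneg_ae (ae_of_all _ fun u => le_max_right _ _)
      hFm.aestronglyMeasurable
  have hval : ∫ t in Ioo (0:ℝ) s, rr g t = (∫ u in Ioo (0:ℝ) 1, F u) + c * s := by
    have hsub : ∫ t in Ioo (0:ℝ) s, (rr g t - c)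
        = (∫ t in Ioo (0:ℝ) s, rr g t) - c * s := by
      rw [integral_sub hint2 (integrable_const c), integral_const,
        measureReal_restrict_apply_univ, measureReal_def, hvols, ENNReal.toReal_ofReal hs0.le, smul_eq_mul, mul_comm]
    have := e2
    rw [hsub, hkey, ← e3] at this
    linarith
  -- the witness sets
  set A := {u ∈ Ioo (0:ℝ) 1 | c < g u} with hA
  set B := {u ∈ Ioo (0:ℝ) 1 | g u = c} with hB
  have hAm : MeasurableSet A := by
    rw [hA, sep_eq]
    exact (measurableSet_lt measurable_const hgm).inter measurableSet_Ioo
  have hBm : MeasurableSet B := by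
    have : B = (g ⁻¹' {c}) ∩ Ioo (0:ℝ) 1 := by
      rw [hB]; ext u; simp [and_comm]
    rw [this]
    exact (hgm (measurableSet_singleton c)).inter measurableSet_Ioo
  have hAvol : volume A = dd g c := vol_sep g c
  have hABdisj : Disjoint A B := by
    rw [Set.disjoint_left]
    rintro u ⟨_, h1⟩ ⟨_, h2⟩
    exact absurd h2 (ne_of_gt h1)
  have hABunion : A ∪ B = {u ∈ Ioo (0:ℝ) 1 | c ≤ g u} := by
    rw [hA, hB]; ext u
    simp only [mem_union, mem_sep_iff]
    constructor
    · rintro (⟨h1, h2⟩ | ⟨h1, h2⟩)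
      · exact ⟨h1, h2.le⟩
      · exact ⟨h1, h2.ge⟩
    · rintro ⟨h1, h2⟩
      rcases eq_or_lt_of_le h2 with h | h
      · exact Or.inr ⟨h1, h.symm⟩
      · exact Or.inl ⟨h1, h⟩
  have hmA_le : volume A ≤ ENNReal.ofReal s := by
    rw [hAvol]
    by_contra hcon
    push_neg at hcon
    have := (lt_rr_iff g hgm hsIoo c).2 hcon
    exact lt_irrefl c this
  have hge : ENNReal.ofReal s ≤ volume (A ∪ B) := by
    have hinter : A ∪ B = ⋂ n : ℕ, {u ∈ Ioo (0:ℝ) 1 | c - 1/(n+1) < g u} := by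
      rw [hABunion]; ext u
      simp only [mem_iInter, mem_sep_iff]
      constructor
      · rintro ⟨h1, h2⟩ n
        refine ⟨h1, ?_⟩
        have : (0:ℝ) < 1/((n:ℝ)+1) := by positivity
        linarith
      · intro h
        refine ⟨(h 0).1, ?_⟩
        by_contra hcon
        push_neg at hcon
        obtain ⟨n, hn⟩ := exists_nat_one_div_lt (show (0:ℝ) < c - g u by linarith)
        have := (h n).2
        push_cast at hn
        linarith
    have hanti : Antitone (fun n : ℕ => {u ∈ Ioo (0:ℝ) 1 | c - 1/((n:ℝ)+1) < g u}) := by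
      intro n m hnm u hu
      obtain ⟨h1, h2⟩ := hu
      refine ⟨h1, ?_⟩
      have hle : (n:ℝ) ≤ m := Nat.cast_le.2 hnm
      have : 1/((m:ℝ)+1) ≤ 1/((n:ℝ)+1) := by
        apply one_div_le_one_div_of_le (by positivity)
        linarith
      linarith
    have htend := tendsto_measure_iInter_atTop (μ := volume)
      (s := fun n : ℕ => {u ∈ Ioo (0:ℝ) 1 | c - 1/((n:ℝ)+1) < g u})
      (fun n => by
        have he : {u | u ∈ Ioo (0:ℝ) 1 ∧ c - 1/((n:ℝ)+1) < g u}
            = {u | c - 1/((n:ℝ)+1) < g u} ∩ Ioo (0:ℝ) 1 := sep_eq g _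
        exact (he ▸ ((measurableSet_lt measurable_const hgm).inter
          measurableSet_Ioo)).nullMeasurableSet)
      hanti
      ⟨0, ne_of_lt (lt_of_le_of_lt (measure_mono fun u hu => hu.1)
        (by rw [Real.volume_Ioo]; exact ENNReal.ofReal_lt_top))⟩
    rw [← hinter] at htend
    refine ge_of_tendsto htend (Filter.Eventually.of_forall fun n => ?_)
    show ENNReal.ofReal s ≤ volume {u ∈ Ioo (0:ℝ) 1 | c - 1/((n:ℝ)+1) < g u}
    rw [vol_sep]
    have hlt : c - 1/((n:ℝ)+1) < rr g s := by
      have : (0:ℝ) < 1/((n:ℝ)+1) := by positivity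
      rw [← hc]; linarith
    exact ((lt_rr_iff g hgm hsIoo _).1 hlt).le
  have hBne : volume B ≠ ⊤ := by
    have h1 : volume B ≤ volume (Ioo (0:ℝ) 1) := measure_mono fun u hu => hu.1
    exact ne_of_lt (lt_of_le_of_lt h1
      (by rw [Real.volume_Ioo]; exact ENNReal.ofReal_lt_top))
  have hAne : volume A ≠ ⊤ :=
    ne_of_lt (lt_of_le_of_lt hmA_le ENNReal.ofReal_lt_top)
  have hA_toReal : (volume A).toReal ≤ s :=
    ENNReal.toReal_le_of_le_ofReal hs0.le hmA_le
  have hs_le : s ≤ (volume A).toReal + (volume B).toReal := by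
    rw [measure_union hABdisj hBm] at hge
    have h1 : (ENNReal.ofReal s).toReal ≤ (volume A + volume B).toReal :=
      ENNReal.toReal_mono (by exact ENNReal.add_ne_top.2 ⟨hAne, hBne⟩) hge
    rw [ENNReal.toReal_ofReal hs0.le, ENNReal.toReal_add hAne hBne] at h1
    exact h1
  set θ : ℝ := if volume B = 0 then 0 else (s - (volume A).toReal)/(volume B).toReal with hθdef
  have hθ0 : 0 ≤ θ := by
    rw [hθdef]
    split_ifs with h
    · exact le_refl 0
    · exact div_nonneg (by linarith) ENNReal.toReal_nonneg
  have hθ1 : θ ≤ 1 := by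
    rw [hθdef]
    split_ifs with h
    · norm_num
    · rw [div_le_one (ENNReal.toReal_pos h hBne)]
      linarith
  have hθB : θ * (volume B).toReal = s - (volume A).toReal := by
    rw [hθdef]
    split_ifs with h
    · rw [h] at hs_le
      simp only [ENNReal.toReal_zero, add_zero] at hs_le
      rw [h]
      simp only [ENNReal.toReal_zero, mul_zero]
      linarith
    · rw [div_mul_cancel₀]
      exact (ENNReal.toReal_pos h hBne).ne'
  set a₀ : ℝ → ℝ := fun u =>
    A.indicator (fun _ => (1:ℝ)) u + θ * B.indicator (fun _ => (1:ℝ)) u with ha₀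
  have ha₀m : Measurable a₀ :=
    (measurable_const.indicator hAm).add ((measurable_const.indicator hBm).const_mul θ)
  have ha₀range : ∀ u, a₀ u ∈ Icc (0:ℝ) 1 := by
    intro u
    by_cases hu : u ∈ A
    · have hu' : u ∉ B := fun h => absurd h.2 (ne_of_gt hu.2)
      simp only [ha₀, indicator_of_mem hu, indicator_of_notMem hu', mul_zero, add_zero]
      exact ⟨zero_le_one, le_refl 1⟩
    · by_cases hu2 : u ∈ B
      · simp only [ha₀, indicator_of_notMem hu, indicator_of_mem hu2, mul_one, zero_add]
        exact ⟨hθ0, hθ1⟩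
      · simp only [ha₀, indicator_of_notMem hu, indicator_of_notMem hu2, mul_zero, add_zero]
        exact ⟨le_refl 0, zero_le_one⟩
  have hμ₀A : μ₀ A = volume A := by
    rw [hμ₀, Measure.restrict_apply hAm]
    congr 1
    exact inter_eq_left.2 (fun u hu => hu.1)
  have hμ₀B : μ₀ B = volume B := by
    rw [hμ₀, Measure.restrict_apply hBm]
    congr 1
    exact inter_eq_left.2 (fun u hu => hu.1)
  have hIA : ∫ u in Ioo (0:ℝ) 1, A.indicator (fun _ => (1:ℝ)) u = (volume A).toReal := by
    rw [show (∫ u in Ioo (0:ℝ) 1, A.indicator (fun _ => (1:ℝ)) u)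
        = ∫ u, A.indicator (fun _ => (1:ℝ)) u ∂μ₀ from rfl,
      integral_indicator hAm, setIntegral_const, smul_eq_mul, mul_one,
      measureReal_def, Measure.restrict_apply hAm]
    congr 1
    rw [← hμ₀A, hμ₀, Measure.restrict_apply hAm]
  have hIB : ∫ u in Ioo (0:ℝ) 1, B.indicator (fun _ => (1:ℝ)) u = (volume B).toReal := by
    rw [show (∫ u in Ioo (0:ℝ) 1, B.indicator (fun _ => (1:ℝ)) u)
        = ∫ u, B.indicator (fun _ => (1:ℝ)) u ∂μ₀ from rfl,
      integral_indicator hBm, setIntegral_const, smul_eq_mul, mul_one,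
      measureReal_def, Measure.restrict_apply hBm]
    congr 1
    rw [← hμ₀B, hμ₀, Measure.restrict_apply hBm]
  have hintIA : Integrable (A.indicator (fun _ => (1:ℝ))) μ₀ :=
    (integrable_const 1).indicator hAm
  have hintIB : Integrable (B.indicator (fun _ => (1:ℝ))) μ₀ :=
    (integrable_const 1).indicator hBm
  have ha₀int : Integrable a₀ μ₀ := hintIA.add (hintIB.const_mul θ)
  have ha₀s : ∫ u in Ioo (0:ℝ) 1, a₀ u = s := by
    rw [show (∫ u in Ioo (0:ℝ) 1, a₀ u) = ∫ u, a₀ u ∂μ₀ from rfl]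
    rw [ha₀, integral_add hintIA (hintIB.const_mul θ), integral_const_mul]
    rw [show (∫ u, A.indicator (fun _ => (1:ℝ)) u ∂μ₀)
        = ∫ u in Ioo (0:ℝ) 1, A.indicator (fun _ => (1:ℝ)) u from rfl, hIA]
    rw [show (∫ u, B.indicator (fun _ => (1:ℝ)) u ∂μ₀)
        = ∫ u in Ioo (0:ℝ) 1, B.indicator (fun _ => (1:ℝ)) u from rfl, hIB]
    rw [hθB]
    ring
  -- pointwise identity for the witness
  have hpt : ∀ u ∈ Ioo (0:ℝ) 1, g u * a₀ u = F u + c * a₀ u := by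
    intro u hu
    by_cases hua : u ∈ A
    · have hub' : u ∉ B := fun h => absurd h.2 (ne_of_gt hua.2)
      have h1 : a₀ u = 1 := by
        simp only [ha₀, indicator_of_mem hua, indicator_of_notMem hub', mul_zero, add_zero]
      have h2 : F u = g u - c := max_eq_left (by linarith [hua.2])
      rw [h1, h2]; ring
    · by_cases hub2 : u ∈ B
      · have h1 : a₀ u = θ := by
          simp only [ha₀, indicator_of_notMem hua, indicator_of_mem hub2, mul_one, zero_add]
        have h2 : F u = 0 := max_eq_right (by rw [hub2.2]; linarith)
        rw [h1, h2, hub2.2]; ring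
      · have h1 : a₀ u = 0 := by
          simp only [ha₀, indicator_of_notMem hua, indicator_of_notMem hub2, mul_zero, add_zero]
        have hgc : ¬ c < g u := fun h => hua ⟨hu, h⟩
        have h2 : F u = 0 := max_eq_right (by push_neg at hgc; linarith)
        rw [h1, h2]; ring
  have hwitness : ∫ u in Ioo (0:ℝ) 1, g u * a₀ u = (∫ u in Ioo (0:ℝ) 1, F u) + c * s := by
    have hcongr : ∫ u in Ioo (0:ℝ) 1, g u * a₀ u
        = ∫ u in Ioo (0:ℝ) 1, (F u + c * a₀ u) :=
      setIntegral_congr_fun measurableSet_Ioo (fun u hu => hpt u hu)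
    rw [hcongr]
    rw [show (∫ u in Ioo (0:ℝ) 1, (F u + c * a₀ u)) = ∫ u, (F u + c * a₀ u) ∂μ₀ from rfl]
    rw [integral_add hFint (ha₀int.const_mul c), integral_const_mul]
    rw [show (∫ u, a₀ u ∂μ₀) = ∫ u in Ioo (0:ℝ) 1, a₀ u from rfl, ha₀s]
  -- upper bound
  have hub : ∀ I ∈ {I : ℝ | ∃ a : ℝ → ℝ, Measurable a ∧ (∀ u, a u ∈ Icc (0:ℝ) 1) ∧
      (∫ u in Ioo (0:ℝ) 1, a u) = s ∧ I = ∫ u in Ioo (0:ℝ) 1, g u * a u},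
      I ≤ (∫ u in Ioo (0:ℝ) 1, F u) + c * s := by
    rintro I ⟨a, ham, ha01, haint, rfl⟩
    have hInt_a : Integrable a μ₀ := by
      apply Integrable.mono' (integrable_const (1:ℝ)) ham.aestronglyMeasurable
      refine ae_of_all _ fun u => ?_
      rw [Real.norm_eq_abs, abs_le]
      exact ⟨by linarith [(ha01 u).1], (ha01 u).2⟩
    have hInt_ga : Integrable (fun u => g u * a u) μ₀ := by
      apply Integrable.mono' hg'.abs (hgm.mul ham).aestronglyMeasurable
      refine ae_of_all _ fun u => ?_
      rw [Real.norm_eq_abs, Pi.mul_apply, abs_mul]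
      calc |g u| * |a u| ≤ |g u| * 1 := by
            apply mul_le_mul_of_nonneg_left _ (abs_nonneg _)
            rw [abs_le]
            exact ⟨by linarith [(ha01 u).1], (ha01 u).2⟩
        _ = |g u| := mul_one _
    have hpt2 : ∀ u, g u * a u ≤ F u + c * a u := by
      intro u
      have h1 : (g u - c) * a u ≤ F u := by
        rcases le_total (g u - c) 0 with h | h
        · exact (mul_nonpos_of_nonpos_of_nonneg h (ha01 u).1).trans (le_max_right _ _)
        · calc (g u - c) * a u ≤ (g u - c) * 1 :=
              mul_le_mul_of_nonneg_left (ha01 u).2 h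
            _ = g u - c := mul_one _
            _ ≤ F u := le_max_left _ _
      calc g u * a u = (g u - c) * a u + c * a u := by ring
        _ ≤ F u + c * a u := by linarith
    calc ∫ u in Ioo (0:ℝ) 1, g u * a u
        ≤ ∫ u in Ioo (0:ℝ) 1, (F u + c * a u) :=
          integral_mono hInt_ga (hFint.add (hInt_a.const_mul c)) hpt2
      _ = (∫ u in Ioo (0:ℝ) 1, F u) + c * s := by
          rw [show (∫ u in Ioo (0:ℝ) 1, (F u + c * a u)) = ∫ u, (F u + c * a u) ∂μ₀ from rfl]
          rw [integral_add hFint (hInt_a.const_mul c), integral_const_mul]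
          rw [show (∫ u, a u ∂μ₀) = ∫ u in Ioo (0:ℝ) 1, a u from rfl, haint]
  have hmem : ((∫ u in Ioo (0:ℝ) 1, F u) + c * s) ∈
      {I : ℝ | ∃ a : ℝ → ℝ, Measurable a ∧ (∀ u, a u ∈ Icc (0:ℝ) 1) ∧
        (∫ u in Ioo (0:ℝ) 1, a u) = s ∧ I = ∫ u in Ioo (0:ℝ) 1, g u * a u} :=
    ⟨a₀, ha₀m, ha₀range, ha₀s, hwitness.symm⟩
  rw [hval]
  exact le_antisymm (le_csSup ⟨_, hub⟩ hmem) (csSup_le ⟨_, hmem⟩ hub)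

lemma vol_congr {f g : ℝ → ℝ} (h : f =ᵐ[volume.restrict (Ioo (0:ℝ) 1)] g) (y : ℝ) :
    volume {u ∈ Ioo (0:ℝ) 1 | y < f u} = volume {u ∈ Ioo (0:ℝ) 1 | y < g u} := by
  have hnull : volume ({u | f u ≠ g u} ∩ Ioo (0:ℝ) 1) = 0 := by
    have h' := h
    rw [Filter.EventuallyEq, ae_iff, Measure.restrict_apply' measurableSet_Ioo] at h'
    exact h'
  apply measure_congr
  rw [MeasureTheory.ae_eq_set]
  constructor
  · apply measure_mono_null _ hnull
    rintro u ⟨⟨hu1, hu2⟩, hu3⟩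
    exact ⟨fun he => hu3 ⟨hu1, he ▸ hu2⟩, hu1⟩
  · apply measure_mono_null _ hnull
    rintro u ⟨⟨hu1, hu2⟩, hu3⟩
    exact ⟨fun he => hu3 ⟨hu1, he ▸ hu2⟩, hu1⟩

lemma rr_congr {f g : ℝ → ℝ} (h : f =ᵐ[volume.restrict (Ioo (0:ℝ) 1)] g) :
    rr f = rr g := by
  funext t; unfold rr; congr 1; ext x
  simp only [mem_setOf_eq]
  rw [vol_congr h]

theorem integral_rr_eq_sSup (f : ℝ → ℝ) (hf : IntegrableOn f (Ioo (0:ℝ) 1))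
    (s : ℝ) (hs : s ∈ Ioo (0:ℝ) 1) :
    (∫ t in Ioo (0:ℝ) s, rr f t) =
      sSup {I : ℝ | ∃ a : ℝ → ℝ, Measurable a ∧ (∀ u, a u ∈ Icc (0:ℝ) 1) ∧
        (∫ u in Ioo (0:ℝ) 1, a u) = s ∧ I = ∫ u in Ioo (0:ℝ) 1, f u * a u} := by
  have hfm := hf.aestronglyMeasurable
  set g := hfm.mk f with hgdef
  have hgm : Measurable g := hfm.stronglyMeasurable_mk.measurable
  have hfg : f =ᵐ[volume.restrict (Ioo (0:ℝ) 1)] g := hfm.ae_eq_mk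
  have hrr : rr f = rr g := rr_congr hfg
  have hIg : IntegrableOn g (Ioo (0:ℝ) 1) := (integrable_congr hfg).1 hf
  have hset : {I : ℝ | ∃ a : ℝ → ℝ, Measurable a ∧ (∀ u, a u ∈ Icc (0:ℝ) 1) ∧
        (∫ u in Ioo (0:ℝ) 1, a u) = s ∧ I = ∫ u in Ioo (0:ℝ) 1, f u * a u}
      = {I : ℝ | ∃ a : ℝ → ℝ, Measurable a ∧ (∀ u, a u ∈ Icc (0:ℝ) 1) ∧
        (∫ u in Ioo (0:ℝ) 1, a u) = s ∧ I = ∫ u in Ioo (0:ℝ) 1, g u * a u} := by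
    ext I
    constructor
    · rintro ⟨a, h1, h2, h3, h4⟩
      exact ⟨a, h1, h2, h3, h4.trans (integral_congr_ae (hfg.mono fun u hu => by
        show f u * a u = g u * a u; rw [hu]))⟩
    · rintro ⟨a, h1, h2, h3, h4⟩
      exact ⟨a, h1, h2, h3, h4.trans (integral_congr_ae (hfg.mono fun u hu => by
        show g u * a u = f u * a u; rw [hu]))⟩
  rw [hrr, hset]
  exact main_meas g hgm hIg hs
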